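/- Square-root counting lemma: let n ≥ 1 and let σ₁ and σ₂ be any two cycles of length 2n+1 in the symmetric group on {1,…,2n+1}. Then the number of permutations θ of {1,…,4n+2} such that θ maps the set {1,…,2n+1} onto the set {2n+2,…,4n+2} and θ² = σ₁ ◇| σ₂ is exactly 2n+1. -/

import Mathlib

/-- Right pasting `α ◇| β`: the permutation of `{1,…,m+n}` with
`(α ◇| β)(i) = α(i)` for `1 ≤ i ≤ m` and `(α ◇| β)(m+i) = β(i) + m` for `1 ≤ i ≤ n`. -/
def pasteRight {m n : ℕ} (α : Equiv.Perm (Fin m)) (β : Equiv.Perm (Fin n)) :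
    Equiv.Perm (Fin (m + n)) :=
  finSumFinEquiv.symm.trans ((Equiv.sumCongr α β).trans finSumFinEquiv)

/-- Transport a permutation of `Fin ((2n+1)+(2n+1))` to one of `Fin (4n+2)`. -/
def toPerm42 (n : ℕ) (σ : Equiv.Perm (Fin (2 * n + 1 + (2 * n + 1)))) :
    Equiv.Perm (Fin (4 * n + 2)) :=
  (finCongr (by omega : 2 * n + 1 + (2 * n + 1) = 4 * n + 2)).permCongr σ

open Equiv Equiv.Perm

lemma commute_iff_zpowers {N : ℕ} {σ : Perm (Fin N)} (hσ : σ.IsCycle)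
    (hs : σ.support = Finset.univ) (g : Perm (Fin N)) :
    Commute g σ ↔ g ∈ Subgroup.zpowers σ := by
  constructor
  · intro h
    obtain ⟨hc', hmem⟩ := hσ.commute_iff.mp h
    convert hmem using 1
    ext x
    rw [ofSubtype_apply_of_mem (g.subtypePerm hc') (by rw [hs]; exact Finset.mem_univ x)]
    rfl
  · rintro ⟨k, rfl⟩
    exact (Commute.refl σ).zpow_left k

lemma ncard_conj_set {N : ℕ} {σ₁ σ₂ : Perm (Fin N)} (h₁ : σ₁.IsCycle) (h₂ : σ₂.IsCycle)
    (hc₁ : σ₁.support.card = N) (hc₂ : σ₂.support.card = N) :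
    Set.ncard {f : Perm (Fin N) | f * σ₁ * f⁻¹ = σ₂} = N := by
  have hs : σ₁.support = Finset.univ := by
    apply Finset.eq_univ_of_card
    simp [hc₁]
  obtain ⟨c, hc⟩ := isConj_iff.mp (h₁.isConj h₂ (hc₁.trans hc₂.symm))
  have hset : {f : Perm (Fin N) | f * σ₁ * f⁻¹ = σ₂} =
      (fun g => c * g) '' (Subgroup.zpowers σ₁ : Set (Perm (Fin N))) := by
    ext f
    simp only [Set.mem_setOf_eq, Set.mem_image, SetLike.mem_coe]
    constructor
    · intro hf
      refine ⟨c⁻¹ * f, ?_, by group⟩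
      rw [← commute_iff_zpowers h₁ hs]
      have : f * σ₁ * f⁻¹ = c * σ₁ * c⁻¹ := by rw [hf, hc]
      have h3 : (c⁻¹ * f) * σ₁ = σ₁ * (c⁻¹ * f) := by
        have := congrArg (fun x => c⁻¹ * x * f) this
        simpa [mul_assoc] using this
      exact h3
    · rintro ⟨g, hg, rfl⟩
      rw [← commute_iff_zpowers h₁ hs] at hg
      rw [mul_inv_rev, show c * g * σ₁ * (g⁻¹ * c⁻¹) = c * (g * σ₁ * g⁻¹) * c⁻¹ by group,
        hg.eq]
      rw [show c * (σ₁ * g * g⁻¹) * c⁻¹ = c * σ₁ * c⁻¹ by group, hc]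
  rw [hset, Set.ncard_image_of_injective _ (mul_right_injective c)]
  have : Set.ncard (Subgroup.zpowers σ₁ : Set (Perm (Fin N))) = Nat.card (Subgroup.zpowers σ₁) := by
    rw [← Nat.card_coe_set_eq]
    rfl
  rw [this, Nat.card_zpowers, h₁.orderOf, hc₁]

def Phi {N : ℕ} (σ₁ : Perm (Fin N)) (f : Perm (Fin N)) : Perm (Fin N ⊕ Fin N) :=
  (Equiv.sumCongr f (σ₁ * f⁻¹)).trans (Equiv.sumComm (Fin N) (Fin N))

lemma Phi_inl {N : ℕ} (σ₁ f : Perm (Fin N)) (x : Fin N) :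
    Phi σ₁ f (Sum.inl x) = Sum.inr (f x) := rfl

lemma Phi_inr {N : ℕ} (σ₁ f : Perm (Fin N)) (y : Fin N) :
    Phi σ₁ f (Sum.inr y) = Sum.inl (σ₁ (f⁻¹ y)) := rfl

lemma Phi_injective {N : ℕ} (σ₁ : Perm (Fin N)) : Function.Injective (Phi σ₁) := by
  intro f f' h
  apply Equiv.ext; intro x
  have := DFunLike.congr_fun h (Sum.inl x)
  simpa [Phi_inl] using this

lemma sum_level {N : ℕ} (σ₁ σ₂ : Perm (Fin N)) :
    {τ : Perm (Fin N ⊕ Fin N) | ⇑τ '' Set.range Sum.inl = Set.range Sum.inr ∧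
        τ ^ 2 = Equiv.sumCongr σ₁ σ₂}
      = Phi σ₁ '' {f : Perm (Fin N) | f * σ₁ * f⁻¹ = σ₂} := by
  ext τ
  simp only [Set.mem_setOf_eq, Set.mem_image]
  constructor
  · rintro ⟨h1, h2⟩
    -- every inl goes to inr
    have hl : ∀ x, ∃ y, τ (Sum.inl x) = Sum.inr y := by
      intro x
      have : τ (Sum.inl x) ∈ Set.range Sum.inr := by
        rw [← h1]; exact ⟨Sum.inl x, ⟨x, rfl⟩, rfl⟩
      obtain ⟨y, hy⟩ := this
      exact ⟨y, hy.symm⟩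
    have hr : ∀ y, ∃ x, τ (Sum.inr y) = Sum.inl x := by
      intro y
      rcases hz : τ (Sum.inr y) with x | z
      · exact ⟨x, rfl⟩
      · exfalso
        have : (Sum.inr z : Fin N ⊕ Fin N) ∈ Set.range Sum.inr := ⟨z, rfl⟩
        rw [← h1] at this
        obtain ⟨w, ⟨x, rfl⟩, hw⟩ := this
        have := τ.injective (hw.trans hz.symm)
        simp at this
    set f : Fin N → Fin N := fun x => Sum.elim id id (τ (Sum.inl x)) with hf
    set g : Fin N → Fin N := fun y => Sum.elim id id (τ (Sum.inr y)) with hg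
    have hτl : ∀ x, τ (Sum.inl x) = Sum.inr (f x) := by
      intro x; obtain ⟨y, hy⟩ := hl x; rw [hy]; simp [hf, hy]
    have hτr : ∀ y, τ (Sum.inr y) = Sum.inl (g y) := by
      intro y; obtain ⟨x, hx⟩ := hr y; rw [hx]; simp [hg, hx]
    have hsq : ∀ z, τ (τ z) = Equiv.sumCongr σ₁ σ₂ z := by
      intro z
      have := DFunLike.congr_fun h2 z
      simpa [pow_two, Equiv.Perm.mul_apply] using this
    have hgf : ∀ x, g (f x) = σ₁ x := by
      intro x
      have := hsq (Sum.inl x)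
      rw [hτl x, hτr (f x)] at this
      simpa using this
    have hfg : ∀ y, f (g y) = σ₂ y := by
      intro y
      have := hsq (Sum.inr y)
      rw [hτr y, hτl (g y)] at this
      simpa using this
    have finj : Function.Injective f := by
      intro a b hab
      have : σ₁ a = σ₁ b := by rw [← hgf a, ← hgf b, hab]
      exact σ₁.injective this
    let F : Perm (Fin N) := Equiv.ofBijective f (Finite.injective_iff_bijective.mp finj)
    have hFapp : ∀ x, F x = f x := fun x => rfl
    refine ⟨F, ?_, ?_⟩
    · -- F * σ₁ * F⁻¹ = σ₂
      have hcomm : F * σ₁ = σ₂ * F := by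
        ext x
        simp only [Equiv.Perm.mul_apply, hFapp]
        rw [← hgf x, hfg (f x)]
      rw [hcomm, mul_inv_cancel_right]
    · -- Phi σ₁ F = τ
      ext z
      rcases z with x | y
      · rw [Phi_inl, hτl x, hFapp]
      · rw [Phi_inr, hτr y]
        congr 1
        have h1' : f (F⁻¹ y) = y := by
          rw [← hFapp]; exact F.apply_symm_apply y
        rw [← hgf (F⁻¹ y), h1']
  · rintro ⟨f, hf, rfl⟩
    constructor
    · ext z
      simp only [Set.mem_image, Set.mem_range]
      constructor
      · rintro ⟨w, ⟨x, rfl⟩, rfl⟩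
        exact ⟨f x, (Phi_inl σ₁ f x).symm⟩
      · rintro ⟨y, rfl⟩
        exact ⟨Sum.inl (f⁻¹ y), ⟨f⁻¹ y, rfl⟩, by rw [Phi_inl]; simp⟩
    · ext z
      have hfy : ∀ y, f (σ₁ (f⁻¹ y)) = σ₂ y := by
        intro y
        have := DFunLike.congr_fun hf y
        simpa [Equiv.Perm.mul_apply] using this
      rcases z with x | y
      · simp [pow_two, Equiv.Perm.mul_apply, Phi_inl, Phi_inr]
      · simp [pow_two, Equiv.Perm.mul_apply, Phi_inl, Phi_inr, hfy y]; exact hfy y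

/-- Square-root counting lemma: for any two `(2n+1)`-cycles `σ₁, σ₂` of `{1,…,2n+1}`,
there are exactly `2n+1` permutations `θ` of `{1,…,4n+2}` mapping `{1,…,2n+1}` onto
`{2n+2,…,4n+2}` with `θ² = σ₁ ◇| σ₂`.  (In `Fin (4*n+2)`, the point `i` is `(i : ℕ) + 1`,
so `{1,…,2n+1}` is `{x | (x : ℕ) < 2n+1}` and `{2n+2,…,4n+2}` is `{x | 2n+1 ≤ (x : ℕ)}`.) -/
theorem count_square_roots (n : ℕ) (hn : 1 ≤ n) (σ₁ σ₂ : Equiv.Perm (Fin (2 * n + 1)))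
    (h₁ : σ₁.IsCycle ∧ σ₁.support.card = 2 * n + 1)
    (h₂ : σ₂.IsCycle ∧ σ₂.support.card = 2 * n + 1) :
    Set.ncard {θ : Equiv.Perm (Fin (4 * n + 2)) |
      ⇑θ '' {x : Fin (4 * n + 2) | (x : ℕ) < 2 * n + 1} =
        {x : Fin (4 * n + 2) | 2 * n + 1 ≤ (x : ℕ)} ∧
      θ ^ 2 = toPerm42 n (pasteRight σ₁ σ₂)} = 2 * n + 1 := by
  obtain ⟨hcy₁, hcard₁⟩ := h₁
  obtain ⟨hcy₂, hcard₂⟩ := h₂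
  have hEq : 2 * n + 1 + (2 * n + 1) = 4 * n + 2 := by omega
  set e : Fin (2 * n + 1) ⊕ Fin (2 * n + 1) ≃ Fin (4 * n + 2) :=
    finSumFinEquiv.trans (finCongr hEq) with he
  -- values of e
  have e_inl : ∀ a : Fin (2 * n + 1), ((e (Sum.inl a) : Fin (4 * n + 2)) : ℕ) = (a : ℕ) := by
    intro a; simp [he]
  have e_inr : ∀ a : Fin (2 * n + 1),
      ((e (Sum.inr a) : Fin (4 * n + 2)) : ℕ) = 2 * n + 1 + (a : ℕ) := by
    intro a; simp [he]; omega
  have hA : {x : Fin (4 * n + 2) | (x : ℕ) < 2 * n + 1} = ⇑e '' Set.range Sum.inl := by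
    ext y
    simp only [Set.mem_setOf_eq, Set.mem_image, Set.mem_range]
    constructor
    · intro hy
      exact ⟨Sum.inl ⟨(y : ℕ), hy⟩, ⟨_, rfl⟩, Fin.ext (by rw [e_inl])⟩
    · rintro ⟨w, ⟨x, rfl⟩, rfl⟩
      rw [e_inl]; exact x.isLt
  have hB : {x : Fin (4 * n + 2) | 2 * n + 1 ≤ (x : ℕ)} = ⇑e '' Set.range Sum.inr := by
    ext y
    simp only [Set.mem_setOf_eq, Set.mem_image, Set.mem_range]
    constructor
    · intro hy
      refine ⟨Sum.inr ⟨(y : ℕ) - (2 * n + 1), by omega⟩, ⟨_, rfl⟩,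
        Fin.ext (by rw [e_inr]; simp only [Fin.val_mk]; omega)⟩
    · rintro ⟨w, ⟨x, rfl⟩, rfl⟩
      rw [e_inr]; omega  -- fine
  have hkey : toPerm42 n (pasteRight σ₁ σ₂) = e.permCongr (Equiv.sumCongr σ₁ σ₂) := by
    apply Equiv.ext; intro x
    rfl
  have hmain : {θ : Equiv.Perm (Fin (4 * n + 2)) |
      ⇑θ '' {x : Fin (4 * n + 2) | (x : ℕ) < 2 * n + 1} =
        {x : Fin (4 * n + 2) | 2 * n + 1 ≤ (x : ℕ)} ∧
      θ ^ 2 = toPerm42 n (pasteRight σ₁ σ₂)}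
      = ⇑e.permCongr '' {τ : Perm (Fin (2 * n + 1) ⊕ Fin (2 * n + 1)) |
          ⇑τ '' Set.range Sum.inl = Set.range Sum.inr ∧ τ ^ 2 = Equiv.sumCongr σ₁ σ₂} := by
    have cond_iff : ∀ τ : Perm (Fin (2 * n + 1) ⊕ Fin (2 * n + 1)),
        (⇑(e.permCongr τ) '' {x : Fin (4 * n + 2) | (x : ℕ) < 2 * n + 1} =
            {x : Fin (4 * n + 2) | 2 * n + 1 ≤ (x : ℕ)} ∧
          (e.permCongr τ) ^ 2 = toPerm42 n (pasteRight σ₁ σ₂))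
        ↔ (⇑τ '' Set.range Sum.inl = Set.range Sum.inr ∧ τ ^ 2 = Equiv.sumCongr σ₁ σ₂) := by
      intro τ
      have himg : ⇑(e.permCongr τ) '' {x : Fin (4 * n + 2) | (x : ℕ) < 2 * n + 1}
          = ⇑e '' (⇑τ '' Set.range Sum.inl) := by
        rw [hA, Set.image_image, Set.image_image]
        apply Set.image_congr'
        intro x
        simp [Equiv.permCongr_apply]
      have hsq : (e.permCongr τ) ^ 2 = e.permCongr (τ ^ 2) := by
        apply Equiv.ext; intro x
        simp [pow_two, Equiv.Perm.mul_apply, Equiv.permCongr_apply]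
      constructor
      · rintro ⟨h1, h2⟩
        refine ⟨?_, ?_⟩
        · rw [himg, hB] at h1
          exact (Set.image_eq_image e.injective).mp h1
        · rw [hsq, hkey] at h2
          exact e.permCongr.injective h2
      · rintro ⟨h1, h2⟩
        refine ⟨?_, ?_⟩
        · rw [himg, h1, hB]
        · rw [hsq, h2, hkey]
    ext θ
    simp only [Set.mem_setOf_eq, Set.mem_image]
    constructor
    · intro hθ
      refine ⟨e.permCongr.symm θ, ?_, e.permCongr.apply_symm_apply θ⟩
      rw [← cond_iff]
      rw [e.permCongr.apply_symm_apply]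
      exact hθ
    · rintro ⟨τ, hτ, rfl⟩
      exact (cond_iff τ).mpr hτ
  rw [hmain, Set.ncard_image_of_injective _ e.permCongr.injective, sum_level,
    Set.ncard_image_of_injective _ (Phi_injective σ₁),
    ncard_conj_set hcy₁ hcy₂ hcard₁ hcard₂]
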